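/- Let K be a field of characteristic ≠ 2, A = K[x_1,x_2,x_3]/(x_1^2+x_2^2+x_3^2−1), Ω = Ω_{A/K} presented as A{dx_1,dx_2,dx_3}/(x_1dx_1+x_2dx_2+x_3dx_3), with projective basis induced by the section s(dx_i) = u_i − x_i G, G = x_1u_1+x_2u_2+x_3u_3. The fundamental matrix is M with M_{ij} = δ_{ij} − x_i x_j. Then for the derivations ∂̄_1 = x_2∂_1 − x_1∂_2 and ∂̄_2 = x_3∂_1 − x_1∂_3, the curvature of the associated connection is R_∇(∂̄_1,∂̄_2) = [∂̄_1(M), ∂̄_2(M)], and this matrix is the nonzero matrix with rows (0, x_1x_3, −x_1x_2), (−x_1x_3, 0, x_1^2), (x_1x_2, −x_1^2, 0) in A; in particular the connection ∇ is not flat. -/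

import Mathlib

set_option synthInstance.maxHeartbeats 800000

noncomputable section
open MvPolynomial

/-- The coordinate ring of the 2-sphere `A = K[x_1,x_2,x_3]/(x_1^2+x_2^2+x_3^2-1)`. -/
abbrev Asph (K : Type*) [Field K] :=
  MvPolynomial (Fin 3) K ⧸
    Ideal.span {(X 0 ^ 2 + X 1 ^ 2 + X 2 ^ 2 - 1 : MvPolynomial (Fin 3) K)}

/-- The image of the variable `x_i` in `A`. -/
def xv (K : Type*) [Field K] (i : Fin 3) : Asph K :=
  Ideal.Quotient.mk _ (X i)

/-- The fundamental matrix `M` of the projective basis for `Ω_{A/K}` coming from the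
section `s(dx_i) = u_i - x_i G`:  `M_{ij} = δ_{ij} - x_i x_j`. -/
def Msph (K : Type*) [Field K] : Matrix (Fin 3) (Fin 3) (Asph K) :=
  Matrix.of fun i j => (if i = j then 1 else 0) - xv K i * xv K j

lemma hrel (K : Type*) [Field K] :
    xv K 0 ^ 2 + xv K 1 ^ 2 + xv K 2 ^ 2 = 1 := by
  have h : (Ideal.Quotient.mk (Ideal.span
      {(X 0 ^ 2 + X 1 ^ 2 + X 2 ^ 2 - 1 : MvPolynomial (Fin 3) K)}))
      (X 0 ^ 2 + X 1 ^ 2 + X 2 ^ 2 - 1) = 0 :=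
    Ideal.Quotient.eq_zero_iff_mem.mpr (Ideal.subset_span rfl)
  have := sub_eq_zero.mp (by simpa [map_sub, map_add, map_pow, xv] using h)
  simpa [xv] using this

lemma mapD {K : Type*} [Field K] (δ : Derivation K (Asph K) (Asph K)) (i j : Fin 3) :
    ((Msph K).map (fun a => δ a)) i j
      = -(δ (xv K i) * xv K j + xv K i * δ (xv K j)) := by
  simp [Msph, Matrix.map_apply]
  split_ifs <;> simp [Derivation.leibniz] <;> ring

lemma fin2eta (h : 2 < 3) : (⟨2, h⟩ : Fin 3) = 2 := rfl

set_option maxHeartbeats 1600000 in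
theorem stmt_16 {K : Type*} [Field K] (h2 : (2 : K) ≠ 0)
    (δ1 δ2 : Derivation K (Asph K) (Asph K))
    (h11 : δ1 (xv K 0) = xv K 1) (h12 : δ1 (xv K 1) = - xv K 0)
    (h13 : δ1 (xv K 2) = 0)
    (h21 : δ2 (xv K 0) = xv K 2) (h22 : δ2 (xv K 1) = 0)
    (h23 : δ2 (xv K 2) = - xv K 0) :
    ((Msph K).map (fun a => δ1 a) * (Msph K).map (fun a => δ2 a)
        - (Msph K).map (fun a => δ2 a) * (Msph K).map (fun a => δ1 a)
      = Matrix.of ![![0, xv K 0 * xv K 2, -(xv K 0 * xv K 1)],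
                    ![-(xv K 0 * xv K 2), 0, xv K 0 ^ 2],
                    ![xv K 0 * xv K 1, -(xv K 0 ^ 2), 0]]) ∧
    ((Msph K).map (fun a => δ1 a) * (Msph K).map (fun a => δ2 a)
        - (Msph K).map (fun a => δ2 a) * (Msph K).map (fun a => δ1 a) ≠ 0) := by
  have hr := hrel K
  set a := xv K 0
  set b := xv K 1
  set c := xv K 2
  have heq : ((Msph K).map (fun x => δ1 x) * (Msph K).map (fun x => δ2 x)
        - (Msph K).map (fun x => δ2 x) * (Msph K).map (fun x => δ1 x)
      = Matrix.of ![![0, a * c, -(a * b)],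
                    ![-(a * c), 0, a ^ 2],
                    ![a * b, -(a ^ 2), 0]]) := by
    ext i j
    fin_cases i <;> fin_cases j <;>
      simp only [Fin.zero_eta, Fin.mk_one, fin2eta, Matrix.sub_apply, Matrix.mul_apply,
        Fin.sum_univ_three, mapD,
        h11, h12, h13, h21, h22, h23, Matrix.of_apply, Matrix.cons_val',
        Matrix.cons_val_zero, Matrix.cons_val_one, Matrix.head_cons,
        Matrix.empty_val', Matrix.cons_val_fin_one, Matrix.head_fin_const,
        Matrix.cons_val_two, Matrix.tail_cons, Fin.isValue] <;>
      (try simp only [show xv K 0 = a from rfl, show xv K 1 = b from rfl,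
        show xv K 2 = c from rfl, h11, h12, h13, h21, h22, h23])
    · linear_combination (0 : Asph K) * hr
    · linear_combination (a * c) * hr
    · linear_combination (-(a * b)) * hr
    · linear_combination (-(a * c)) * hr
    · linear_combination (0 : Asph K) * hr
    · linear_combination (a ^ 2) * hr
    · linear_combination (a * b) * hr
    · linear_combination (-(a ^ 2)) * hr
    · linear_combination (0 : Asph K) * hr
  refine ⟨heq, ?_⟩
  intro h0
  rw [heq] at h0
  have ha2 : a ^ 2 = 0 := by
    have := congrFun (congrFun h0 1) 2
    simpa using this
  -- evaluate at the point (1,0,0)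
  let f : MvPolynomial (Fin 3) K →+* K :=
    (aeval (fun i : Fin 3 => if i = 0 then (1 : K) else 0)).toRingHom
  have hker : Ideal.span {(X 0 ^ 2 + X 1 ^ 2 + X 2 ^ 2 - 1 : MvPolynomial (Fin 3) K)}
      ≤ RingHom.ker f := by
    rw [Ideal.span_le, Set.singleton_subset_iff]
    simp [RingHom.mem_ker, f]
  let φ : Asph K →+* K := Ideal.Quotient.lift _ f hker
  have : φ (a ^ 2) = 1 := by
    simp [φ, a, xv, map_pow, f]
  rw [ha2, map_zero] at this
  exact one_ne_zero this.symm
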